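/- arXiv:1710.04699 — 4 statements merged into one kernel-verified Lean document; each statement's English description precedes it below -/
import Mathlib

section
/- Fix real a with 0 < a < 1. Then lim_{N→∞} Γ(N−1, N·a) / (N−2)! = 1. Moreover, if a > 1, then lim_{N→∞} Γ(N−1, N·a) / (N−2)! = 0. -/
open MeasureTheory Real Filter

noncomputable def iGamma (N : ℕ) (a : ℝ) : ℝ := ∫ u in Set.Ioi a, Real.exp (-u) * u ^ (N - 1)

open Set

lemma integrable_aux (n : ℕ) : IntegrableOn (fun u : ℝ => Real.exp (-u) * u ^ n) (Ioi 0) := by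
  have h := Real.GammaIntegral_convergent (s := (n : ℝ) + 1) (by positivity)
  simpa [Real.rpow_natCast] using h

lemma total_aux (n : ℕ) :
    ∫ u in Ioi (0:ℝ), Real.exp (-u) * u ^ n = (Nat.factorial n : ℝ) := by
  have h := Real.Gamma_eq_integral (s := (n : ℝ) + 1) (by positivity)
  rw [Real.Gamma_nat_eq_factorial] at h
  rw [h]
  norm_num [Real.rpow_natCast]

lemma int_exp_aux {b : ℝ} (c : ℝ) (hb : 0 < b) :
    ∫ u in Ioi c, Real.exp (-(b * u)) = Real.exp (-(b * c)) / b := by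
  have hderiv : ∀ x ∈ Ici c, HasDerivAt (fun u => -Real.exp (-(b * u)) / b)
      (Real.exp (-(b * x))) x := by
    intro x _
    have := (((hasDerivAt_id x).const_mul b).neg.exp.neg.div_const b)
    convert this using 1
    · rfl
    · rfl
    · rfl
    · simp only [Pi.neg_apply, id, mul_one, neg_mul, neg_neg]
      field_simp
  have hint : IntegrableOn (fun u : ℝ => Real.exp (-(b * u))) (Ioi c) := by
    simpa [neg_mul] using exp_neg_integrableOn_Ioi c hb
  have htend : Tendsto (fun u : ℝ => -Real.exp (-(b * u)) / b) atTop (nhds 0) := by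
    have h1 : Tendsto (fun u : ℝ => -(b * u)) atTop atBot := by
      simpa [neg_mul] using (tendsto_id (α := ℝ)).const_mul_atTop_of_neg
        (by linarith : -b < 0) |>.comp tendsto_id
    have := (tendsto_exp_atBot.comp h1).neg.div_const b
    simpa using this
  have := integral_Ioi_of_hasDerivAt_of_tendsto' hderiv hint htend
  rw [this]
  ring

lemma pow_le_exp_aux {n : ℕ} {c u b : ℝ} (hc : 0 < c) (hu : 0 ≤ u)
    (hkey : (n : ℝ) * ((u - c) / c) ≤ b * (u - c)) :
    u ^ n ≤ c ^ n * Real.exp (b * (u - c)) := by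
  have h1 : u / c ≤ Real.exp ((u - c) / c) := by
    have h2 : (u - c) / c + 1 ≤ Real.exp ((u - c) / c) := Real.add_one_le_exp _
    have : u / c = (u - c) / c + 1 := by field_simp; ring
    linarith
  have h3 : (u / c) ^ n ≤ Real.exp ((u - c) / c) ^ n :=
    pow_le_pow_left₀ (by positivity) h1 n
  rw [← Real.exp_nat_mul] at h3
  have h4 : Real.exp ((n : ℝ) * ((u - c) / c)) ≤ Real.exp (b * (u - c)) :=
    Real.exp_le_exp.2 hkey
  have h5 : (u / c) ^ n ≤ Real.exp (b * (u - c)) := h3.trans h4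
  calc u ^ n = (u / c) ^ n * c ^ n := by
        rw [div_pow]; field_simp
    _ ≤ Real.exp (b * (u - c)) * c ^ n :=
        mul_le_mul_of_nonneg_right h5 (by positivity)
    _ = c ^ n * Real.exp (b * (u - c)) := mul_comm _ _

lemma tail_bound {n : ℕ} {c b : ℝ} (hc : 0 < c) (hb : 0 < b) (hb1 : b < 1)
    (hn : (n : ℝ) ≤ b * c) :
    ∫ u in Ioi c, Real.exp (-u) * u ^ n ≤ c ^ n * Real.exp (-c) / (1 - b) := by
  have hmono : ∫ u in Ioi c, Real.exp (-u) * u ^ n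
      ≤ ∫ u in Ioi c, c ^ n * Real.exp (-(b * c)) * Real.exp (-((1 - b) * u)) := by
    refine setIntegral_mono_on ?_ ?_ measurableSet_Ioi ?_
    · exact (integrable_aux n).mono_set (Ioi_subset_Ioi hc.le)
    · have h := exp_neg_integrableOn_Ioi c (show (0:ℝ) < 1 - b by linarith)
      have h' : IntegrableOn (fun u : ℝ => Real.exp (-((1 - b) * u))) (Ioi c) := by
        have he : (fun u : ℝ => Real.exp (-((1 - b) * u)))
            = fun u : ℝ => Real.exp (-(1 - b) * u) := by
          funext u; ring_nf
        rw [he]; exact h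
      exact h'.const_mul _
    · intro u hu
      have hu' : c ≤ u := le_of_lt hu
      have hp : u ^ n ≤ c ^ n * Real.exp (b * (u - c)) := by
        refine pow_le_exp_aux hc (hc.le.trans hu') ?_
        have h1 : (n : ℝ) / c ≤ b := (div_le_iff₀ hc).2 (by linarith [hn])
        have h2 : 0 ≤ u - c := by linarith
        calc (n : ℝ) * ((u - c) / c) = ((n : ℝ) / c) * (u - c) := by ring
          _ ≤ b * (u - c) := mul_le_mul_of_nonneg_right h1 h2
      calc Real.exp (-u) * u ^ n ≤ Real.exp (-u) * (c ^ n * Real.exp (b * (u - c))) :=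
            mul_le_mul_of_nonneg_left hp (Real.exp_pos _).le
        _ = c ^ n * Real.exp (-(b * c)) * Real.exp (-((1 - b) * u)) := by
            rw [mul_left_comm, ← Real.exp_add, mul_assoc, ← Real.exp_add]
            congr 1
            ring
  refine hmono.trans ?_
  rw [MeasureTheory.integral_const_mul, int_exp_aux c (by linarith : (0:ℝ) < 1 - b)]
  refine le_of_eq ?_
  have he : Real.exp (-(b * c)) * Real.exp (-((1 - b) * c)) = Real.exp (-c) := by
    rw [← Real.exp_add]; congr 1; ring
  rw [show c ^ n * Real.exp (-(b * c)) * (Real.exp (-((1 - b) * c)) / (1 - b))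
      = c ^ n * (Real.exp (-(b * c)) * Real.exp (-((1 - b) * c))) / (1 - b) from by ring, he]

lemma head_bound {n : ℕ} {c : ℝ} (hc : 0 < c) (hn : c ≤ (n : ℝ)) :
    ∫ u in Ioc (0:ℝ) c, Real.exp (-u) * u ^ n ≤ c * (c ^ n * Real.exp (-c)) := by
  have hmono : ∫ u in Ioc (0:ℝ) c, Real.exp (-u) * u ^ n
      ≤ ∫ _ in Ioc (0:ℝ) c, c ^ n * Real.exp (-c) := by
    refine setIntegral_mono_on ?_ ?_ measurableSet_Ioc ?_
    · exact (integrable_aux n).mono_set Ioc_subset_Ioi_self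
    · exact integrableOn_const measure_Ioc_lt_top.ne
    · intro u hu
      obtain ⟨hu0, huc⟩ := hu
      have hp : u ^ n ≤ c ^ n * Real.exp (1 * (u - c)) := by
        refine pow_le_exp_aux hc hu0.le ?_
        have h1 : (1:ℝ) ≤ (n : ℝ) / c := (le_div_iff₀ hc).2 (by linarith)
        have h2 : u - c ≤ 0 := by linarith
        have : ((n : ℝ) / c) * (u - c) ≤ 1 * (u - c) := mul_le_mul_of_nonpos_right h1 h2
        calc (n : ℝ) * ((u - c) / c) = ((n : ℝ) / c) * (u - c) := by ring
          _ ≤ 1 * (u - c) := this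
      calc Real.exp (-u) * u ^ n ≤ Real.exp (-u) * (c ^ n * Real.exp (1 * (u - c))) :=
            mul_le_mul_of_nonneg_left hp (Real.exp_pos _).le
        _ = c ^ n * Real.exp (-c) := by
            rw [mul_comm (Real.exp (-u)), mul_assoc, ← Real.exp_add]
            ring_nf
  refine hmono.trans ?_
  rw [setIntegral_const, smul_eq_mul, Real.volume_real_Ioc]
  rw [max_eq_left (by linarith)]
  simp

lemma keybound {a : ℝ} (ha : 0 < a) {N : ℕ} (hN : 2 ≤ N) :
    ((N : ℝ) * a) ^ (N - 2) * Real.exp (-((N : ℝ) * a)) / (Nat.factorial (N - 2) : ℝ)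
      ≤ a⁻¹ ^ 2 * (a * Real.exp (1 - a)) ^ N := by
  have h1 : ((N : ℝ)) ^ (N - 2) / (Nat.factorial (N - 2) : ℝ) ≤ Real.exp (N : ℝ) :=
    Real.pow_div_factorial_le_exp (x := (N:ℝ)) (Nat.cast_nonneg N) (N - 2)
  have lhs_eq : ((N : ℝ) * a) ^ (N - 2) * Real.exp (-((N : ℝ) * a)) / (Nat.factorial (N - 2) : ℝ)
      = ((N : ℝ) ^ (N - 2) / (Nat.factorial (N - 2) : ℝ)) * (a ^ (N - 2) * Real.exp (-((N : ℝ) * a))) := by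
    rw [mul_pow]; ring
  rw [lhs_eq]
  have h2 := mul_le_mul_of_nonneg_right h1
    (show 0 ≤ a ^ (N - 2) * Real.exp (-((N : ℝ) * a)) by positivity)
  refine h2.trans (le_of_eq ?_)
  have hee : Real.exp ((N : ℝ)) * Real.exp (-((N : ℝ) * a)) = Real.exp (1 - a) ^ N := by
    rw [← Real.exp_add, ← Real.exp_nat_mul]; congr 1; ring
  have hpow : a ^ (N - 2) = a ^ N * a⁻¹ ^ 2 := by
    rw [pow_sub₀ a (ne_of_gt ha) hN, ← inv_pow]
  rw [mul_pow, hpow]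
  calc Real.exp ((N : ℝ)) * (a ^ N * a⁻¹ ^ 2 * Real.exp (-((N : ℝ) * a)))
      = a⁻¹ ^ 2 * a ^ N * (Real.exp ((N : ℝ)) * Real.exp (-((N : ℝ) * a))) := by ring
    _ = a⁻¹ ^ 2 * (a ^ N * Real.exp (1 - a) ^ N) := by rw [hee]; ring

lemma r_lt_one {a : ℝ} (ha : 0 < a) (hne : a ≠ 1) : a * Real.exp (1 - a) < 1 := by
  have h := Real.add_one_lt_exp (x := a - 1) (by intro h; apply hne; linarith [sub_eq_zero.mp h])
  have h2 : a < Real.exp (a - 1) := by linarith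
  have h3 : a * Real.exp (1 - a) < Real.exp (a - 1) * Real.exp (1 - a) :=
    mul_lt_mul_of_pos_right h2 (Real.exp_pos _)
  rwa [← Real.exp_add, show (a - 1) + (1 - a) = 0 by ring, Real.exp_zero] at h3

theorem stmt3 (a : ℝ) :
    (0 < a → a < 1 →
      Tendsto (fun N : ℕ => iGamma (N - 1) ((N : ℝ) * a) / (Nat.factorial (N - 2)))
        atTop (nhds 1)) ∧
    (1 < a →
      Tendsto (fun N : ℕ => iGamma (N - 1) ((N : ℝ) * a) / (Nat.factorial (N - 2)))
        atTop (nhds 0)) := by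
  constructor
  · intro ha0 ha1
    have hr0 : (0:ℝ) ≤ a * Real.exp (1 - a) := by positivity
    have hr1 : a * Real.exp (1 - a) < 1 := r_lt_one ha0 (ne_of_lt ha1)
    have hQ : Tendsto (fun N : ℕ =>
        (∫ u in Ioc (0:ℝ) ((N:ℝ) * a), Real.exp (-u) * u ^ (N - 2))
          / (Nat.factorial (N - 2) : ℝ)) atTop (nhds 0) := by
      have hlim : Tendsto (fun N : ℕ =>
          a⁻¹ * ((N:ℝ) ^ 1 * (a * Real.exp (1 - a)) ^ N)) atTop (nhds 0) := by
        have h := (tendsto_pow_const_mul_const_pow_of_abs_lt_one 1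
          (by rwa [abs_of_nonneg hr0])).const_mul a⁻¹
        simpa using h
      refine squeeze_zero' (Eventually.of_forall fun N => ?_) ?_ hlim
      · refine div_nonneg (setIntegral_nonneg measurableSet_Ioc fun u hu => ?_)
          (Nat.cast_nonneg _)
        have h1 := hu.1
        positivity
      · have hmul : Tendsto (fun N : ℕ => (N:ℝ) * (1 - a)) atTop atTop :=
          tendsto_natCast_atTop_atTop.atTop_mul_const (by linarith)
        filter_upwards [hmul.eventually_ge_atTop 2, eventually_ge_atTop 2] with N hNa hN2
        have hNpos : (0:ℝ) < N := by
          have h2 : (2:ℝ) ≤ (N:ℝ) := by exact_mod_cast hN2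
          linarith
        have hc : (0:ℝ) < (N:ℝ) * a := by positivity
        have hcast : ((N - 2 : ℕ) : ℝ) = (N:ℝ) - 2 := by
          rw [Nat.cast_sub hN2]; norm_num
        have hcn : (N:ℝ) * a ≤ ((N - 2 : ℕ) : ℝ) := by rw [hcast]; nlinarith
        have hhead := head_bound hc hcn
        have hfac : (0:ℝ) < (Nat.factorial (N - 2) : ℝ) := by
          exact_mod_cast Nat.factorial_pos _
        have hkey := keybound ha0 hN2
        calc (∫ u in Ioc (0:ℝ) ((N:ℝ) * a), Real.exp (-u) * u ^ (N - 2))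
              / (Nat.factorial (N - 2) : ℝ)
            ≤ ((N:ℝ) * a * (((N:ℝ) * a) ^ (N - 2) * Real.exp (-((N:ℝ) * a))))
              / (Nat.factorial (N - 2) : ℝ) := by gcongr
          _ = (N:ℝ) * a * ((((N:ℝ) * a) ^ (N - 2) * Real.exp (-((N:ℝ) * a)))
              / (Nat.factorial (N - 2) : ℝ)) := by ring
          _ ≤ (N:ℝ) * a * (a⁻¹ ^ 2 * (a * Real.exp (1 - a)) ^ N) :=
              mul_le_mul_of_nonneg_left hkey (by positivity)
          _ = a⁻¹ * ((N:ℝ) ^ 1 * (a * Real.exp (1 - a)) ^ N) := by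
              field_simp
    have heq : ∀ᶠ N : ℕ in atTop,
        iGamma (N - 1) ((N : ℝ) * a) / (Nat.factorial (N - 2) : ℝ)
          = 1 - (∫ u in Ioc (0:ℝ) ((N:ℝ) * a), Real.exp (-u) * u ^ (N - 2))
              / (Nat.factorial (N - 2) : ℝ) := by
      filter_upwards [eventually_ge_atTop 2] with N hN2
      have hNpos : (0:ℝ) < N := by
        have h2 : (2:ℝ) ≤ (N:ℝ) := by exact_mod_cast hN2
        linarith
      have hc : (0:ℝ) < (N:ℝ) * a := by positivity
      have hfac : (0:ℝ) < (Nat.factorial (N - 2) : ℝ) := by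
        exact_mod_cast Nat.factorial_pos _
      have hexp : N - 1 - 1 = N - 2 := by omega
      have hsplit : (Nat.factorial (N - 2) : ℝ)
          = (∫ u in Ioc (0:ℝ) ((N:ℝ) * a), Real.exp (-u) * u ^ (N - 2))
            + ∫ u in Ioi ((N:ℝ) * a), Real.exp (-u) * u ^ (N - 2) := by
        rw [← total_aux (N - 2), ← Ioc_union_Ioi_eq_Ioi hc.le,
          setIntegral_union (Ioc_disjoint_Ioi le_rfl) measurableSet_Ioi
            ((integrable_aux _).mono_set Ioc_subset_Ioi_self)
            ((integrable_aux _).mono_set (Ioi_subset_Ioi hc.le))]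
      simp only [iGamma, hexp]
      rw [eq_sub_iff_add_eq, ← add_div, div_eq_one_iff_eq hfac.ne']
      linarith [hsplit]
    have h1 : Tendsto (fun N : ℕ => 1 -
        (∫ u in Ioc (0:ℝ) ((N:ℝ) * a), Real.exp (-u) * u ^ (N - 2))
          / (Nat.factorial (N - 2) : ℝ)) atTop (nhds 1) := by
      simpa using tendsto_const_nhds.sub hQ
    exact h1.congr' (by filter_upwards [heq] with N h using h.symm)
  · intro ha1
    have ha0 : (0:ℝ) < a := by linarith
    have hr0 : (0:ℝ) ≤ a * Real.exp (1 - a) := by positivity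
    have hr1 : a * Real.exp (1 - a) < 1 := r_lt_one ha0 (by linarith)
    have hb : (0:ℝ) < a⁻¹ := by positivity
    have hb1 : a⁻¹ < 1 := by
      rw [inv_lt_one_iff₀]; right; exact ha1
    have h1b : (0:ℝ) < 1 - a⁻¹ := by linarith
    have hlim : Tendsto (fun N : ℕ =>
        (1 - a⁻¹)⁻¹ * a⁻¹ ^ 2 * (a * Real.exp (1 - a)) ^ N) atTop (nhds 0) := by
      have h := (tendsto_pow_atTop_nhds_zero_of_lt_one hr0 hr1).const_mul
        ((1 - a⁻¹)⁻¹ * a⁻¹ ^ 2)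
      simpa using h
    refine squeeze_zero' (Eventually.of_forall fun N => ?_) ?_ hlim
    · refine div_nonneg (setIntegral_nonneg measurableSet_Ioi fun u hu => ?_)
        (Nat.cast_nonneg _)
      have h0 : (0:ℝ) < u := lt_of_le_of_lt (by positivity) hu
      positivity
    · filter_upwards [eventually_ge_atTop 2] with N hN2
      have hNpos : (0:ℝ) < N := by
        have h2 : (2:ℝ) ≤ (N:ℝ) := by exact_mod_cast hN2
        linarith
      have hc : (0:ℝ) < (N:ℝ) * a := by positivity
      have hexp : N - 1 - 1 = N - 2 := by omega
      have hn : ((N - 2 : ℕ) : ℝ) ≤ a⁻¹ * ((N:ℝ) * a) := by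
        have he : a⁻¹ * ((N:ℝ) * a) = (N:ℝ) := by field_simp
        rw [he]; exact_mod_cast Nat.sub_le N 2
      have htail := tail_bound hc hb hb1 hn
      have hfac : (0:ℝ) < (Nat.factorial (N - 2) : ℝ) := by
        exact_mod_cast Nat.factorial_pos _
      have hkey := keybound ha0 hN2
      simp only [iGamma, hexp]
      calc (∫ u in Ioi ((N:ℝ) * a), Real.exp (-u) * u ^ (N - 2))
            / (Nat.factorial (N - 2) : ℝ)
          ≤ (((N:ℝ) * a) ^ (N - 2) * Real.exp (-((N:ℝ) * a)) / (1 - a⁻¹))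
            / (Nat.factorial (N - 2) : ℝ) := by gcongr
        _ = (1 - a⁻¹)⁻¹ * (((N:ℝ) * a) ^ (N - 2) * Real.exp (-((N:ℝ) * a))
            / (Nat.factorial (N - 2) : ℝ)) := by ring
        _ ≤ (1 - a⁻¹)⁻¹ * (a⁻¹ ^ 2 * (a * Real.exp (1 - a)) ^ N) :=
            mul_le_mul_of_nonneg_left hkey (by positivity)
        _ = (1 - a⁻¹)⁻¹ * a⁻¹ ^ 2 * (a * Real.exp (1 - a)) ^ N := by ring
end

section
/- Let N ≥ 2 be an integer and λ a real number. Define the function P(t, λ) = (1/(2√(2π))) · e^{-(λ²/2)(1 + t/(1+t))} · t^{(N−3)/2} / (1+t)^{(N+1)/2} · ∑_{k=0}^{N−1} (λ^{2k}/k!) · [(N−1−k) + k/(1+t)] for t > 0. Then ∫_0^∞ P(t, λ) dt = (1/(√(2π)(N−2)!)) · [Γ(N−1, λ²) + |λ|^{N−1} e^{-λ²/2} ∫_0^{|λ|} e^{-u²/2} u^{N−2} du]. -/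
open MeasureTheory Real Filter

open Topology Set


lemma telescope (M : ℕ) (u : ℝ) :
    ∑ j ∈ Finset.range (M+1), ((M.factorial : ℝ) / j.factorial) * (u^j - j * u^(j-1)) = u ^ M := by
  induction M with
  | zero => simp
  | succ M ih =>
    rw [Finset.sum_range_succ]
    have h : ∀ j ∈ Finset.range (M+1), (((M+1).factorial : ℝ) / j.factorial) * (u^j - j*u^(j-1))
        = (M+1) * (((M.factorial : ℝ) / j.factorial) * (u^j - j*u^(j-1))) := by
      intro j _
      rw [Nat.factorial_succ]; push_cast; ring
    rw [Finset.sum_congr rfl h, ← Finset.mul_sum, ih, div_self (by positivity)]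
    push_cast
    ring_nf

lemma igamma_eq (M : ℕ) (a : ℝ) (ha : 0 ≤ a) :
    ∫ u in Set.Ioi a, Real.exp (-u) * u ^ M
      = Real.exp (-a) * ∑ j ∈ Finset.range (M+1), ((M.factorial : ℝ) / j.factorial) * a ^ j := by
  set g : ℝ → ℝ := fun u => -∑ j ∈ Finset.range (M+1),
      ((M.factorial : ℝ)/j.factorial) * (Real.exp (-u) * u^j) with hg
  have hd : ∀ x ∈ Set.Ici a, HasDerivAt g (Real.exp (-x) * x ^ M) x := by
    intro x _
    have h1 : HasDerivAt (fun u : ℝ => ∑ j ∈ Finset.range (M+1),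
        ((M.factorial : ℝ)/j.factorial) * (Real.exp (-u) * u^j))
        (∑ j ∈ Finset.range (M+1),
          ((M.factorial : ℝ)/j.factorial) *
            ((Real.exp (-x) * (-1)) * x^j + Real.exp (-x) * (j * x^(j-1)))) x := by
      apply HasDerivAt.fun_sum
      intro j _
      exact (((Real.hasDerivAt_exp (-x)).comp x ((hasDerivAt_id x).fun_neg)).fun_mul
        (hasDerivAt_pow j x)).const_mul _
    have h2 := h1.fun_neg
    refine h2.congr_deriv (Eq.symm ?_)
    rw [← telescope M x, ← Finset.sum_neg_distrib, Finset.mul_sum]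
    apply Finset.sum_congr rfl
    intro j _
    ring
  have hnn : ∀ x ∈ Set.Ioi a, 0 ≤ Real.exp (-x) * x ^ M := by
    intro x hx
    have : (0:ℝ) ≤ x := le_of_lt (lt_of_le_of_lt ha hx)
    positivity
  have htend : Tendsto g atTop (𝓝 0) := by
    have h0 : Tendsto (fun u : ℝ => ∑ j ∈ Finset.range (M+1),
        ((M.factorial : ℝ)/j.factorial) * (Real.exp (-u) * u^j)) atTop
        (𝓝 (∑ j ∈ Finset.range (M+1), ((M.factorial : ℝ)/j.factorial) * 0)) := by
      apply tendsto_finset_sum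
      intro j _
      apply Tendsto.const_mul
      have := Real.tendsto_pow_mul_exp_neg_atTop_nhds_zero j
      simpa [mul_comm] using this
    simpa using h0.neg
  have := MeasureTheory.integral_Ioi_of_hasDerivAt_of_nonneg' hd hnn htend
  rw [this, hg]
  simp [Finset.mul_sum]
  apply Finset.sum_congr rfl
  intro j _
  ring

lemma int_exp_rpow (l : ℝ) {r : ℝ} (hr : -1 < r) :
    IntegrableOn (fun s : ℝ => Real.exp (-(l^2*s/2)) * s ^ r) (Set.Ioo (0:ℝ) 1) := by
  have h1 : IntegrableOn (fun s : ℝ => s ^ r) (Set.Ioo (0:ℝ) 1) := by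
    have h := intervalIntegral.intervalIntegrable_rpow' (r := r) hr (a := 0) (b := 1)
    rwa [intervalIntegrable_iff_integrableOn_Ioo_of_le (by norm_num)] at h
  refine h1.mono' ?_ ?_
  · apply ContinuousOn.aestronglyMeasurable ?_ measurableSet_Ioo
    intro x hx
    exact (((continuous_exp.comp (by continuity)).continuousAt).mul
      ((Real.continuousAt_rpow_const x r (Or.inl (ne_of_gt hx.1))))).continuousWithinAt
  · filter_upwards [ae_restrict_mem measurableSet_Ioo] with s hs
    have hs0 : (0:ℝ) < s := hs.1
    rw [norm_mul, norm_of_nonneg (le_of_lt (Real.exp_pos _)), Real.norm_rpow_of_nonneg hs0.le,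
      Real.norm_eq_abs, abs_of_pos hs0]
    nth_rewrite 2 [← one_mul (s ^ r)]
    apply mul_le_mul_of_nonneg_right _ (Real.rpow_nonneg hs0.le r)
    exact Real.exp_le_one_iff.mpr (by nlinarith [sq_nonneg l, hs0.le])

lemma ftc_B (N : ℕ) (hN : 2 ≤ N) (l : ℝ) :
    ∫ s in Set.Ioo (0:ℝ) 1, Real.exp (-(l^2*s/2)) * s ^ (((N:ℝ)-3)/2) * (((N:ℝ)-1) - l^2*s)
      = 2 * Real.exp (-(l^2/2)) := by
  have hN' : (2:ℝ) ≤ (N:ℝ) := by exact_mod_cast hN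
  have ha : (-1:ℝ) < ((N:ℝ)-3)/2 := by linarith
  have hq : (0:ℝ) < ((N:ℝ)-1)/2 := by linarith
  set F : ℝ → ℝ := fun s => 2 * (Real.exp (-(l^2*s/2)) * s ^ (((N:ℝ)-1)/2)) with hF
  set f' : ℝ → ℝ := fun s => Real.exp (-(l^2*s/2)) * s ^ (((N:ℝ)-3)/2) * (((N:ℝ)-1) - l^2*s)
    with hf'
  have hint : IntegrableOn f' (Set.Ioo (0:ℝ) 1) := by
    have h1 := (int_exp_rpow l ha).mul_const ((N:ℝ)-1)
    have h2 := (int_exp_rpow l (by linarith : (-1:ℝ) < ((N:ℝ)-3)/2 + 1)).mul_const (l^2)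
    apply MeasureTheory.IntegrableOn.congr_fun (h1.sub h2) ?_ measurableSet_Ioo
    intro s hs
    simp only [hf', Pi.sub_apply]
    rw [Real.rpow_add hs.1, Real.rpow_one]
    ring
  have hcont : ContinuousOn F (Set.Icc (0:ℝ) 1) := by
    intro x _
    apply ContinuousAt.continuousWithinAt
    exact (continuousAt_const.mul (((continuous_exp.comp (by continuity)).continuousAt).mul
      (Real.continuousAt_rpow_const x _ (Or.inr hq.le))))
  have hderiv : ∀ x ∈ Set.Ioo (0:ℝ) 1, HasDerivWithinAt F (f' x) (Set.Ioi x) x := by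
    intro x hx
    apply HasDerivAt.hasDerivWithinAt
    have he : HasDerivAt (fun s : ℝ => Real.exp (-(l^2*s/2))) (Real.exp (-(l^2*x/2)) * (-(l^2/2))) x := by
      have : HasDerivAt (fun s : ℝ => -(l^2*s/2)) (-(l^2/2)) x := by
        have h0 := ((hasDerivAt_id x).const_mul (l^2/2)).fun_neg
        have e : (fun s : ℝ => -(l^2*s/2)) = fun i => -(l^2/2 * id i) := by
          funext s; simp only [id]; ring
        rw [e]; exact h0.congr_deriv (by ring)
      exact this.exp
    have hp : HasDerivAt (fun s : ℝ => s ^ (((N:ℝ)-1)/2))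
        ((((N:ℝ)-1)/2) * x ^ (((N:ℝ)-1)/2 - 1)) x :=
      Real.hasDerivAt_rpow_const (Or.inl (ne_of_gt hx.1))
    have h := ((he.fun_mul hp).const_mul 2)
    refine h.congr_deriv (Eq.symm ?_)
    simp only [hf']
    rw [show (((N:ℝ)-1)/2 - 1) = ((N:ℝ)-3)/2 by ring,
      show (((N:ℝ)-1)/2) = ((N:ℝ)-3)/2 + 1 by ring, Real.rpow_add hx.1, Real.rpow_one]
    ring
  have hii : IntervalIntegrable f' volume 0 1 := by
    rwa [intervalIntegrable_iff_integrableOn_Ioo_of_le (by norm_num)]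
  have key := intervalIntegral.integral_eq_sub_of_hasDeriv_right_of_le (by norm_num : (0:ℝ) ≤ 1)
    hcont hderiv hii
  rw [intervalIntegral.integral_of_le (by norm_num : (0:ℝ) ≤ 1),
    MeasureTheory.integral_Ioc_eq_integral_Ioo] at key
  rw [key, hF]
  simp only []
  rw [Real.one_rpow, Real.zero_rpow (ne_of_gt hq)]
  ring_nf

lemma sum_shift (N : ℕ) (hN : 2 ≤ N) (l : ℝ) :
    ∑ k ∈ Finset.range N, (k:ℝ) * (l^(2*k) / k.factorial)
      = l^2 * ∑ k ∈ Finset.range (N-1), l^(2*k) / k.factorial := by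
  obtain ⟨m, rfl⟩ : ∃ m, N = m + 1 := ⟨N - 1, (Nat.succ_pred_eq_of_pos (by omega)).symm⟩
  rw [Finset.sum_range_succ' (fun k => (k:ℝ) * (l^(2*k) / k.factorial)) m]
  simp only [Nat.add_sub_cancel, Finset.mul_sum]
  rw [Nat.cast_zero, zero_mul, add_zero]
  apply Finset.sum_congr rfl
  intro k _
  have hfac : ((k+1).factorial : ℝ) = (k+1) * k.factorial := by
    rw [Nat.factorial_succ]; push_cast; ring
  have hk1 : ((k:ℝ)+1) ≠ 0 := by positivity
  have hkf : (k.factorial : ℝ) ≠ 0 := by positivity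
  rw [show 2*(k+1) = 2*k+2 by ring, pow_add, hfac]
  push_cast
  field_simp

lemma sum_eval (N : ℕ) (hN : 2 ≤ N) (l s : ℝ) :
    ∑ k ∈ Finset.range N, l^(2*k) / (k.factorial : ℝ) * (((N:ℝ) - 1 - k) + (k:ℝ) * (1 - s))
    = (((N:ℝ) - 1) - l^2*s) * (∑ k ∈ Finset.range (N-1), l^(2*k) / (k.factorial : ℝ))
      + ((N:ℝ)-1) * (l^(2*(N-1)) / ((N-1).factorial : ℝ)) := by
  have h1 : ∀ k ∈ Finset.range N, l^(2*k) / (k.factorial : ℝ) * (((N:ℝ) - 1 - k) + (k:ℝ) * (1 - s))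
      = ((N:ℝ)-1) * (l^(2*k) / (k.factorial : ℝ)) - s * ((k:ℝ) * (l^(2*k) / k.factorial)) := by
    intro k _; ring
  rw [Finset.sum_congr rfl h1, Finset.sum_sub_distrib, ← Finset.mul_sum, ← Finset.mul_sum,
    sum_shift N hN l]
  have h2 : ∑ k ∈ Finset.range N, l^(2*k) / (k.factorial : ℝ)
      = (∑ k ∈ Finset.range (N-1), l^(2*k) / (k.factorial : ℝ))
        + l^(2*(N-1)) / ((N-1).factorial : ℝ) := by
    have : N = (N-1) + 1 := by omega
    rw [this, Finset.sum_range_succ]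
    simp [← this]
  rw [h2]
  ring

lemma image_A : (fun s : ℝ => s/(1-s)) '' Set.Ioo (0:ℝ) 1 = Set.Ioi (0:ℝ) := by
  ext y
  constructor
  · rintro ⟨s, hs, rfl⟩
    exact div_pos hs.1 (by linarith [hs.2])
  · intro hy
    have hy0 : (0:ℝ) < y := hy
    refine ⟨y/(1+y), ⟨div_pos hy0 (by linarith), ?_⟩, ?_⟩
    · rw [div_lt_one (by linarith)]; linarith
    · show y/(1+y) / (1 - y/(1+y)) = y
      have h1 : 1 - y/(1+y) = 1/(1+y) := by field_simp; ring
      rw [h1]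
      field_simp

lemma deriv_A : ∀ s ∈ Set.Ioo (0:ℝ) 1, HasDerivWithinAt (fun s : ℝ => s/(1-s))
    (((1-s)^2)⁻¹) (Set.Ioo (0:ℝ) 1) s := by
  intro s hs
  have h1 : (1:ℝ) - s ≠ 0 := by have := hs.2; nlinarith [hs.2]
  apply HasDerivAt.hasDerivWithinAt
  have h := (hasDerivAt_id s).fun_div ((hasDerivAt_id s).const_sub 1) h1
  refine h.congr_deriv (Eq.symm ?_)
  simp only [id]
  rw [show (1:ℝ) * (1 - s) - s * -1 = 1 by ring, one_div]

lemma inj_A : Set.InjOn (fun s : ℝ => s/(1-s)) (Set.Ioo (0:ℝ) 1) := by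
  intro a ha b hb h
  have h1 : (1:ℝ) - a ≠ 0 := by nlinarith [ha.2]
  have h2 : (1:ℝ) - b ≠ 0 := by nlinarith [hb.2]
  simp only at h
  field_simp at h
  nlinarith [h]

lemma int_psi (N : ℕ) (hN : 2 ≤ N) (l : ℝ) :
    IntegrableOn (fun s : ℝ => Real.exp (-(l^2*s/2)) * s ^ (((N:ℝ)-3)/2) * (((N:ℝ)-1) - l^2*s))
      (Set.Ioo (0:ℝ) 1) := by
  have hN' : (2:ℝ) ≤ (N:ℝ) := by exact_mod_cast hN
  have ha : (-1:ℝ) < ((N:ℝ)-3)/2 := by linarith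
  have h1 := (int_exp_rpow l ha).mul_const ((N:ℝ)-1)
  have h2 := (int_exp_rpow l (by linarith : (-1:ℝ) < ((N:ℝ)-3)/2 + 1)).mul_const (l^2)
  apply MeasureTheory.IntegrableOn.congr_fun (h1.sub h2) ?_ measurableSet_Ioo
  intro s hs
  simp only [Pi.sub_apply]
  rw [Real.rpow_add hs.1, Real.rpow_one]
  ring

lemma int_combo (N : ℕ) (hN : 2 ≤ N) (l b c : ℝ) :
    ∫ s in Set.Ioo (0:ℝ) 1,
        Real.exp (-(l^2*s/2)) * s ^ (((N:ℝ)-3)/2) * ((((N:ℝ)-1) - l^2*s) * b + c)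
    = 2 * Real.exp (-(l^2/2)) * b
      + c * ∫ s in Set.Ioo (0:ℝ) 1, Real.exp (-(l^2*s/2)) * s ^ (((N:ℝ)-3)/2) := by
  have hN' : (2:ℝ) ≤ (N:ℝ) := by exact_mod_cast hN
  have ha : (-1:ℝ) < ((N:ℝ)-3)/2 := by linarith
  have heq : (fun s : ℝ => Real.exp (-(l^2*s/2)) * s ^ (((N:ℝ)-3)/2) * ((((N:ℝ)-1) - l^2*s) * b + c))
      = fun s : ℝ => b * (Real.exp (-(l^2*s/2)) * s ^ (((N:ℝ)-3)/2) * (((N:ℝ)-1) - l^2*s))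
        + c * (Real.exp (-(l^2*s/2)) * s ^ (((N:ℝ)-3)/2)) := by
    funext s; ring
  rw [heq, MeasureTheory.integral_add ((int_psi N hN l).const_mul b)
    ((int_exp_rpow l ha).const_mul c), MeasureTheory.integral_const_mul,
    MeasureTheory.integral_const_mul, ftc_B N hN l]
  ring

lemma image_D (l : ℝ) (hl : l ≠ 0) :
    (fun u : ℝ => u^2/l^2) '' Set.Ioo (0:ℝ) |l| = Set.Ioo (0:ℝ) 1 := by
  have hl0 : (0:ℝ) < |l| := abs_pos.mpr hl
  have hl2 : (0:ℝ) < l^2 := by positivity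
  ext y
  constructor
  · rintro ⟨u, hu, rfl⟩
    have hu0 : (0:ℝ) < u := hu.1
    constructor
    · exact div_pos (by positivity) hl2
    · rw [div_lt_one hl2, ← sq_abs l]
      nlinarith [hu.1, hu.2]
  · intro hy
    have hsy : (0:ℝ) < Real.sqrt y := Real.sqrt_pos.mpr hy.1
    refine ⟨|l| * Real.sqrt y, ⟨mul_pos hl0 hsy, ?_⟩, ?_⟩
    · nth_rewrite 2 [← mul_one |l|]
      apply mul_lt_mul_of_pos_left _ hl0
      rw [show (1:ℝ) = Real.sqrt 1 by simp]
      exact Real.sqrt_lt_sqrt hy.1.le hy.2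
    · show (|l| * Real.sqrt y)^2 / l^2 = y
      rw [mul_pow, sq_abs, Real.sq_sqrt hy.1.le]
      field_simp

lemma subst_D (N : ℕ) (hN : 2 ≤ N) (l : ℝ) (hl : l ≠ 0) :
    ∫ s in Set.Ioo (0:ℝ) 1, Real.exp (-(l^2*s/2)) * s ^ (((N:ℝ)-3)/2)
    = (2 / |l|^(N-1)) * ∫ u in Set.Ioo (0:ℝ) |l|, Real.exp (-(u^2/2)) * u^(N-2) := by
  have hl0 : (0:ℝ) < |l| := abs_pos.mpr hl
  have hl2 : (0:ℝ) < l^2 := by positivity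
  have hderiv : ∀ u ∈ Set.Ioo (0:ℝ) |l|, HasDerivWithinAt (fun u : ℝ => u^2/l^2)
      (2*u/l^2) (Set.Ioo (0:ℝ) |l|) u := by
    intro u hu
    apply HasDerivAt.hasDerivWithinAt
    have h := (hasDerivAt_pow 2 u).div_const (l^2)
    refine h.congr_deriv (Eq.symm ?_)
    simp
  have hinj : Set.InjOn (fun u : ℝ => u^2/l^2) (Set.Ioo (0:ℝ) |l|) := by
    intro a ha b hb h
    simp only at h
    have h2 : a^2 = b^2 := by
      field_simp at h; exact h
    nlinarith [ha.1, hb.1]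
  rw [← image_D l hl, MeasureTheory.integral_image_eq_integral_abs_deriv_smul
    measurableSet_Ioo hderiv hinj]
  rw [← MeasureTheory.integral_const_mul]
  apply MeasureTheory.setIntegral_congr_fun measurableSet_Ioo
  intro u hu
  have hu0 : (0:ℝ) < u := hu.1
  have hNr : (2:ℝ) ≤ (N:ℝ) := by exact_mod_cast hN
  simp only [smul_eq_mul]
  rw [abs_of_pos (by positivity : (0:ℝ) < 2*u/l^2)]
  have e1 : -(l^2*(u^2/l^2)/2) = -(u^2/2) := by field_simp
  have e2 : (u^2/l^2) ^ (((N:ℝ)-3)/2) = u ^ ((N:ℝ)-3) / |l| ^ ((N:ℝ)-3) := by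
    rw [show u^2/l^2 = (u/|l|)^2 by rw [div_pow, sq_abs],
      ← Real.rpow_natCast (u/|l|) 2, ← Real.rpow_mul (by positivity)]
    rw [show ((2:ℕ):ℝ) * (((N:ℝ)-3)/2) = (N:ℝ)-3 by push_cast; ring]
    rw [Real.div_rpow hu0.le hl0.le]
  rw [e1, e2]
  have e3 : u ^ ((N:ℝ)-3) = u ^ (N-2 : ℕ) / u := by
    rw [eq_div_iff hu0.ne', ← Real.rpow_natCast u (N-2), Nat.cast_sub hN,
      show ((N:ℝ)-(2:ℕ)) = ((N:ℝ)-3) + 1 by push_cast; ring, Real.rpow_add hu0, Real.rpow_one]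
  have e5 : |l| ^ ((N:ℝ)-3) = |l| ^ (N-1 : ℕ) / l^2 := by
    rw [eq_div_iff (ne_of_gt hl2), ← Real.rpow_natCast |l| (N-1), Nat.cast_sub (by omega : 1 ≤ N),
      show ((N:ℝ)-(1:ℕ)) = ((N:ℝ)-3) + 2 by push_cast; ring, Real.rpow_add hl0,
      show ((2:ℝ)) = ((2:ℕ):ℝ) by norm_num, Real.rpow_natCast, sq_abs]
  rw [e3, e5]
  have h2 : (|l| ^ (N-1:ℕ)) ≠ 0 := by positivity
  field_simp

lemma igamma_val (N : ℕ) (hN : 2 ≤ N) (l : ℝ) :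
    iGamma (N-1) (l^2) = ((N-2).factorial : ℝ) * Real.exp (-l^2) *
      ∑ k ∈ Finset.range (N-1), l^(2*k) / (k.factorial : ℝ) := by
  unfold iGamma
  rw [show N-1-1 = N-2 by omega, igamma_eq (N-2) (l^2) (by positivity),
    show N-2+1 = N-1 by omega]
  rw [mul_comm (((N-2).factorial : ℝ)) (Real.exp (-l^2)), mul_assoc]
  congr 1
  rw [Finset.mul_sum]
  apply Finset.sum_congr rfl
  intro j _
  rw [pow_mul]
  ring

theorem stmt5 (N : ℕ) (hN : 2 ≤ N) (l : ℝ) :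
    (∫ t in Set.Ioi (0 : ℝ),
      (1 / (2 * Real.sqrt (2 * π))) * Real.exp (-(l ^ 2 / 2) * (1 + t / (1 + t))) *
        (t ^ (((N : ℝ) - 3) / 2) / (1 + t) ^ (((N : ℝ) + 1) / 2)) *
        ∑ k ∈ Finset.range N,
          l ^ (2 * k) / (Nat.factorial k) * (((N : ℝ) - 1 - k) + (k : ℝ) / (1 + t)))
    = (1 / (Real.sqrt (2 * π) * Nat.factorial (N - 2))) *
        (iGamma (N - 1) (l ^ 2) +
          |l| ^ (N - 1) * Real.exp (-l ^ 2 / 2) *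
            ∫ u in (0 : ℝ)..|l|, Real.exp (-u ^ 2 / 2) * u ^ (N - 2)) := by
  have hNr : (2:ℝ) ≤ (N:ℝ) := by exact_mod_cast hN
  have hpi : (0:ℝ) < Real.sqrt (2*π) := Real.sqrt_pos.mpr (by positivity)
  set S2 := ∑ k ∈ Finset.range (N-1), l^(2*k) / (k.factorial : ℝ) with hS2
  set A1 := ∫ s in Set.Ioo (0:ℝ) 1, Real.exp (-(l^2*s/2)) * s ^ (((N:ℝ)-3)/2) with hA1
  set c : ℝ := ((N:ℝ)-1) * (l^(2*(N-1)) / ((N-1).factorial : ℝ)) with hc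
  -- Step A : substitution t = s/(1-s)
  rw [← image_A, MeasureTheory.integral_image_eq_integral_abs_deriv_smul
    measurableSet_Ioo deriv_A inj_A]
  have hpt : Set.EqOn
      (fun s : ℝ => |((1-s)^2)⁻¹| • ((1 / (2 * Real.sqrt (2 * π))) *
        Real.exp (-(l ^ 2 / 2) * (1 + (s/(1-s)) / (1 + s/(1-s)))) *
        ((s/(1-s)) ^ (((N : ℝ) - 3) / 2) / (1 + s/(1-s)) ^ (((N : ℝ) + 1) / 2)) *
        ∑ k ∈ Finset.range N,
          l ^ (2 * k) / (Nat.factorial k) * (((N : ℝ) - 1 - k) + (k : ℝ) / (1 + s/(1-s)))))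
      (fun s : ℝ => (1/(2*Real.sqrt (2*π)) * Real.exp (-(l^2/2))) *
        (Real.exp (-(l^2*s/2)) * s ^ (((N:ℝ)-3)/2) * ((((N:ℝ)-1) - l^2*s) * S2 + c)))
      (Set.Ioo (0:ℝ) 1) := by
    intro s hs
    have hs0 : (0:ℝ) < s := hs.1
    have hs1 : (0:ℝ) < 1 - s := by have := hs.2; linarith
    have h1t : 1 + s/(1-s) = (1-s)⁻¹ := by field_simp; ring
    have hts : (s/(1-s)) / (1 + s/(1-s)) = s := by
      rw [h1t, div_inv_eq_mul, div_mul_cancel₀ _ (ne_of_gt hs1)]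
    have hpow : (s/(1-s)) ^ (((N:ℝ)-3)/2) / (1 + s/(1-s)) ^ (((N:ℝ)+1)/2)
        = s ^ (((N:ℝ)-3)/2) * (1-s)^2 := by
      rw [h1t, Real.div_rpow hs0.le hs1.le, Real.inv_rpow hs1.le, div_inv_eq_mul,
        div_mul_eq_mul_div, mul_div_assoc, ← Real.rpow_sub hs1,
        show ((N:ℝ)+1)/2 - ((N:ℝ)-3)/2 = ((2:ℕ):ℝ) by push_cast; ring, Real.rpow_natCast]
    have hsum : ∑ k ∈ Finset.range N,
        l ^ (2 * k) / (Nat.factorial k : ℝ) * (((N : ℝ) - 1 - k) + (k : ℝ) / (1 + s/(1-s)))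
        = (((N:ℝ)-1) - l^2*s) * S2 + c := by
      rw [← sum_eval N hN l s]
      apply Finset.sum_congr rfl
      intro k _
      rw [h1t, div_inv_eq_mul]
    simp only [smul_eq_mul]
    rw [hts, hpow, hsum, show -(l^2/2) * (1+s) = -(l^2/2) + -(l^2*s/2) by ring, Real.exp_add,
      abs_of_pos (by positivity : (0:ℝ) < ((1-s)^2)⁻¹)]
    field_simp
  rw [MeasureTheory.setIntegral_congr_fun measurableSet_Ioo hpt,
    MeasureTheory.integral_const_mul, int_combo N hN l S2 c, ← hA1]
  -- RHS
  rw [igamma_val N hN l, ← hS2]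
  have hJ : |l|^(N-1) * Real.exp (-l^2/2) *
      (∫ u in (0:ℝ)..|l|, Real.exp (-u^2/2) * u^(N-2))
      = Real.exp (-(l^2/2)) * (l^(2*(N-1)) * A1 / 2) := by
    by_cases hl : l = 0
    · subst hl
      simp [zero_pow (show N-1 ≠ 0 by omega), zero_pow (show 2*(N-1) ≠ 0 by omega)]
    · have hD := subst_D N hN l hl
      have hl0 : (0:ℝ) < |l| := abs_pos.mpr hl
      have hlp : (0:ℝ) < |l|^(N-1) := by positivity
      have hIoo : (∫ u in (0:ℝ)..|l|, Real.exp (-u^2/2) * u^(N-2))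
          = ∫ u in Set.Ioo (0:ℝ) |l|, Real.exp (-(u^2/2)) * u^(N-2) := by
        rw [intervalIntegral.integral_of_le (abs_nonneg l),
          MeasureTheory.integral_Ioc_eq_integral_Ioo]
        apply MeasureTheory.setIntegral_congr_fun measurableSet_Ioo
        intro u _
        simp only [neg_div]
      rw [hIoo]
      have hval : (∫ u in Set.Ioo (0:ℝ) |l|, Real.exp (-(u^2/2)) * u^(N-2))
          = |l|^(N-1) * A1 / 2 := by
        rw [hA1, hD]
        field_simp
      rw [hval]
      have habs2 : |l|^(N-1) * |l|^(N-1) = l^(2*(N-1)) := by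
        rw [← pow_add, show (N-1)+(N-1) = 2*(N-1) by omega, pow_mul, pow_mul, sq_abs]
      rw [neg_div]
      calc |l|^(N-1) * Real.exp (-(l^2/2)) * (|l|^(N-1) * A1 / 2)
          = (|l|^(N-1) * |l|^(N-1)) * Real.exp (-(l^2/2)) * A1 / 2 := by ring
        _ = Real.exp (-(l^2/2)) * (l^(2*(N-1)) * A1 / 2) := by rw [habs2]; ring
  rw [hJ]
  -- final algebra
  have hfac : ((N-1).factorial : ℝ) = ((N:ℝ)-1) * ((N-2).factorial : ℝ) := by
    rw [show N-1 = (N-2)+1 by omega, Nat.factorial_succ]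
    push_cast [Nat.cast_sub hN]
    ring
  have he : Real.exp (-l^2) = Real.exp (-(l^2/2)) * Real.exp (-(l^2/2)) := by
    rw [← Real.exp_add]; ring_nf
  have hf2 : (((N-2).factorial : ℝ)) ≠ 0 := by positivity
  have hf1 : ((N:ℝ)-1) ≠ 0 := by linarith
  rw [he, hc, hfac]
  field_simp
end

section
/- For any integer N ≥ 2 and real λ, the two expressions for the joint density agree: (1/(2√(2π))) e^{-(λ²/2)(1+t/(1+t))} t^{(N−3)/2}/(1+t)^{(N+1)/2} ∑_{k=0}^{N−1} (λ^{2k}/k!)[(N−1−k)+k/(1+t)] = (1/(2√(2π))) e^{λ²/(2(1+t))} (1/(t(1+t))) (t/(1+t))^{(N−1)/2} (1/(N−2)!) [Γ(N, λ²) − λ²·(t/(1+t))·Γ(N−1, λ²)], for all t > 0. -/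
open MeasureTheory Real Filter Topology

lemma shift_sum (m : ℕ) (a : ℝ) :
    ∑ k ∈ Finset.range (m + 1), (k : ℝ) * (a ^ k / (Nat.factorial k))
      = a * ∑ k ∈ Finset.range m, a ^ k / (Nat.factorial k) := by
  rw [Finset.sum_range_succ', Finset.mul_sum]
  simp only [Nat.cast_zero, zero_mul, add_zero]
  refine Finset.sum_congr rfl fun k _ => ?_
  have h : (Nat.factorial (k + 1) : ℝ) = (k + 1) * Nat.factorial k := by
    push_cast [Nat.factorial_succ]; ring
  have hk : (Nat.factorial k : ℝ) ≠ 0 := Nat.cast_ne_zero.2 k.factorial_ne_zero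
  rw [h]
  push_cast
  field_simp
  ring

lemma integral_exp_neg_pow (m : ℕ) (a : ℝ) (ha : 0 ≤ a) :
    ∫ u in Set.Ioi a, Real.exp (-u) * u ^ m
      = Real.exp (-a) * ∑ k ∈ Finset.range (m + 1),
          ((Nat.factorial m : ℝ) / (Nat.factorial k)) * a ^ k := by
  set F : ℝ → ℝ := fun u => ∑ k ∈ Finset.range (m + 1),
      ((Nat.factorial m : ℝ) / (Nat.factorial k)) * u ^ k with hF
  set f : ℝ → ℝ := fun u => -(Real.exp (-u) * F u) with hf
  have hFd : ∀ u : ℝ, HasDerivAt F (∑ k ∈ Finset.range m,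
      ((Nat.factorial m : ℝ) / (Nat.factorial k)) * u ^ k) u := by
    intro u
    have : HasDerivAt F (∑ k ∈ Finset.range (m + 1),
        ((Nat.factorial m : ℝ) / (Nat.factorial k)) * ((k : ℝ) * u ^ (k - 1))) u := by
      apply HasDerivAt.fun_sum
      intro k _
      exact (hasDerivAt_pow k u).const_mul _
    convert this using 1
    rw [Finset.sum_range_succ']
    simp only [Nat.cast_zero, zero_mul, mul_zero, add_zero, Nat.add_sub_cancel]
    refine Finset.sum_congr rfl fun k _ => ?_
    have h : (Nat.factorial (k + 1) : ℝ) = (k + 1) * Nat.factorial k := by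
      push_cast [Nat.factorial_succ]; ring
    have hk : (Nat.factorial k : ℝ) ≠ 0 := Nat.cast_ne_zero.2 k.factorial_ne_zero
    rw [h]
    push_cast
    field_simp
  have hfd : ∀ u : ℝ, HasDerivAt f (Real.exp (-u) * u ^ m) u := by
    intro u
    have h1 : HasDerivAt (fun u : ℝ => Real.exp (-u)) (-Real.exp (-u)) u := by
      simpa using (hasDerivAt_id' u).neg.exp
    have h2 : HasDerivAt (fun u => -(Real.exp (-u) * F u)) (-(-Real.exp (-u) * F u + Real.exp (-u) *
        ∑ k ∈ Finset.range m, ((Nat.factorial m : ℝ) / (Nat.factorial k)) * u ^ k)) u :=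
      (h1.mul (hFd u)).neg
    convert h2 using 1
    have hFu : F u = (∑ k ∈ Finset.range m,
        ((Nat.factorial m : ℝ) / (Nat.factorial k)) * u ^ k) + u ^ m := by
      simp only [hF]
      rw [Finset.sum_range_succ]
      have : ((Nat.factorial m : ℝ) / (Nat.factorial m)) = 1 := by
        field_simp
      rw [this, one_mul]
    rw [hFu]; ring
  have hint : IntegrableOn (fun u : ℝ => Real.exp (-u) * u ^ m) (Set.Ioi a) := by
    have h0 : IntegrableOn (fun u : ℝ => Real.exp (-u) * u ^ ((m + 1 : ℝ) - 1)) (Set.Ioi 0) :=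
      Real.GammaIntegral_convergent (by positivity)
    have h1 : IntegrableOn (fun u : ℝ => Real.exp (-u) * u ^ ((m + 1 : ℝ) - 1)) (Set.Ioi a) :=
      h0.mono_set (Set.Ioi_subset_Ioi ha)
    refine h1.congr_fun (fun x hx => ?_) measurableSet_Ioi
    have hx0 : 0 < x := lt_of_le_of_lt ha hx
    rw [show (m + 1 : ℝ) - 1 = (m : ℝ) by ring]; dsimp only; rw [Real.rpow_natCast]
  have htend : Tendsto f atTop (𝓝 0) := by
    have : Tendsto (fun u : ℝ => Real.exp (-u) * F u) atTop (𝓝 0) := by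
      have : Tendsto (fun u : ℝ => ∑ k ∈ Finset.range (m + 1),
          ((Nat.factorial m : ℝ) / (Nat.factorial k)) * (u ^ k * Real.exp (-u))) atTop (𝓝 0) := by
        have h := tendsto_finset_sum (Finset.range (m + 1))
          (fun k _ => (tendsto_pow_mul_exp_neg_atTop_nhds_zero k).const_mul
            ((Nat.factorial m : ℝ) / (Nat.factorial k)))
        simpa using h
      refine this.congr fun u => ?_
      simp only [hF, Finset.mul_sum]
      refine Finset.sum_congr rfl fun k _ => by ring
    simpa [hf] using this.neg
  have key := integral_Ioi_of_hasDerivAt_of_tendsto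
    (f := f) (f' := fun u => Real.exp (-u) * u ^ m) (a := a) (m := 0)
    (hfd a).continuousAt.continuousWithinAt (fun x _ => hfd x) hint htend
  rw [key, hf, hF, Finset.mul_sum]
  simp only [zero_sub, neg_neg, Finset.mul_sum]

lemma iGamma_eq (m : ℕ) (a : ℝ) (ha : 0 ≤ a) :
    iGamma (m + 1) a = (Nat.factorial m : ℝ) * Real.exp (-a) *
      ∑ k ∈ Finset.range (m + 1), a ^ k / (Nat.factorial k) := by
  rw [iGamma, Nat.add_sub_cancel, integral_exp_neg_pow m a ha, Finset.mul_sum, Finset.mul_sum]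
  refine Finset.sum_congr rfl fun k _ => by ring

theorem stmt6 (N : ℕ) (hN : 2 ≤ N) (l : ℝ) (t : ℝ) (ht : 0 < t) :
    (1 / (2 * Real.sqrt (2 * π))) * Real.exp (-(l ^ 2 / 2) * (1 + t / (1 + t))) *
        (t ^ (((N : ℝ) - 3) / 2) / (1 + t) ^ (((N : ℝ) + 1) / 2)) *
        ∑ k ∈ Finset.range N,
          l ^ (2 * k) / (Nat.factorial k) * (((N : ℝ) - 1 - k) + (k : ℝ) / (1 + t))
    = (1 / (2 * Real.sqrt (2 * π))) * Real.exp (l ^ 2 / (2 * (1 + t))) *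
        (1 / (t * (1 + t))) * (t / (1 + t)) ^ (((N : ℝ) - 1) / 2) *
        (1 / Nat.factorial (N - 2)) *
        (iGamma N (l ^ 2) - l ^ 2 * (t / (1 + t)) * iGamma (N - 1) (l ^ 2)) := by
  obtain ⟨m, rfl⟩ : ∃ m, N = m + 2 := ⟨N - 2, by omega⟩
  set a := l ^ 2 with ha
  have ha0 : 0 ≤ a := sq_nonneg l
  have ht1 : (0:ℝ) < 1 + t := by linarith
  have hG1 : iGamma (m + 2) a = (Nat.factorial (m + 1) : ℝ) * Real.exp (-a) *
      ∑ k ∈ Finset.range (m + 2), a ^ k / (Nat.factorial k) := iGamma_eq (m + 1) a ha0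
  have hG2 : iGamma (m + 2 - 1) a = (Nat.factorial m : ℝ) * Real.exp (-a) *
      ∑ k ∈ Finset.range (m + 1), a ^ k / (Nat.factorial k) := iGamma_eq m a ha0
  rw [hG1, hG2]
  -- exponentials
  have hexp : Real.exp (-(a / 2) * (1 + t / (1 + t)))
      = Real.exp (a / (2 * (1 + t))) * Real.exp (-a) := by
    rw [← Real.exp_add]
    congr 1
    field_simp
    ring
  -- powers
  have hne : (t : ℝ) ≠ 0 := ne_of_gt ht
  have h1tne : (1 + t : ℝ) ≠ 0 := ne_of_gt ht1
  set p : ℝ := (((m + 2 : ℕ) : ℝ) - 1) / 2 with hp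
  have hpow : t ^ ((((m + 2 : ℕ) : ℝ) - 3) / 2) / (1 + t) ^ ((((m + 2 : ℕ) : ℝ) + 1) / 2)
      = (1 / (t * (1 + t))) * (t / (1 + t)) ^ p := by
    have e1 : (((m + 2 : ℕ) : ℝ) - 3) / 2 = p - 1 := by rw [hp]; push_cast; ring
    have e2 : (((m + 2 : ℕ) : ℝ) + 1) / 2 = p + 1 := by rw [hp]; push_cast; ring
    rw [e1, e2, Real.rpow_sub ht, Real.rpow_add ht1, Real.rpow_one, Real.rpow_one,
      Real.div_rpow ht.le ht1.le]
    have h1 : (1 + t) ^ p ≠ 0 := ne_of_gt (Real.rpow_pos_of_pos ht1 p)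
    have h2 : (t : ℝ) ^ p ≠ 0 := ne_of_gt (Real.rpow_pos_of_pos ht p)
    generalize t ^ p = X at *
    generalize (1 + t) ^ p = Y at *
    field_simp
    try ring
    try tauto
  -- sum identity
  have hsum : (∑ k ∈ Finset.range (m + 2), l ^ (2 * k) / (Nat.factorial k) *
        ((((m + 2 : ℕ) : ℝ) - 1 - k) + (k : ℝ) / (1 + t)))
      = ((m : ℝ) + 1) * ∑ k ∈ Finset.range (m + 2), a ^ k / (Nat.factorial k)
        - (t / (1 + t)) * (a * ∑ k ∈ Finset.range (m + 1), a ^ k / (Nat.factorial k)) := by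
    rw [← shift_sum (m + 1) a, Finset.mul_sum, Finset.mul_sum, ← Finset.sum_sub_distrib]
    refine Finset.sum_congr rfl fun k _ => ?_
    have hl : l ^ (2 * k) = a ^ k := by rw [ha, ← pow_mul, mul_comm]
    rw [hl]
    have hk : (Nat.factorial k : ℝ) ≠ 0 := Nat.cast_ne_zero.2 k.factorial_ne_zero
    push_cast
    field_simp
    ring
  rw [hexp, hpow, hsum]
  have hm : (Nat.factorial m : ℝ) ≠ 0 := Nat.cast_ne_zero.2 m.factorial_ne_zero
  have hm1 : ((Nat.factorial (m + 1) : ℝ)) = ((m : ℝ) + 1) * (Nat.factorial m : ℝ) := by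
    push_cast [Nat.factorial_succ]; ring
  have hNm : m + 2 - 2 = m := by omega
  rw [hNm, hm1]
  field_simp
end

section
/- Fix real x with |x| < 1 and s > 0. For λ = √N·x and t = N·s, the rescaled joint density satisfies lim_{N→∞} N·P_N(N s, √N x) = (1/(2√(2π))) · e^{-(1−x²)/(2s)} · (1−x²)/s², where P_N(t, λ) = (1/(2√(2π))) e^{λ²/(2(1+t))} (1/(t(1+t))) (t/(1+t))^{(N−1)/2} (1/(N−2)!) [Γ(N, λ²) − λ²(t/(1+t))Γ(N−1, λ²)]. -/
open MeasureTheory Real Filter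

lemma aux_mono (n : ℕ) {u v : ℝ} (hu : 0 ≤ u) (huv : u ≤ v) (hv : v ≤ (n : ℝ)) :
    Real.exp (-u) * u ^ n ≤ Real.exp (-v) * v ^ n := by
  rcases eq_or_lt_of_le hu with h0 | h0
  · rcases Nat.eq_zero_or_pos n with hn | hn
    · subst hn
      have hv0 : v = 0 := le_antisymm (by simpa using hv) (le_trans hu huv)
      simp [← h0, hv0]
    · rw [← h0, zero_pow (by omega), mul_zero]
      exact mul_nonneg (Real.exp_nonneg _) (pow_nonneg (hu.trans huv) n)
  · have hv0 : 0 < v := lt_of_lt_of_le h0 huv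
    have h1 : u / v ≤ Real.exp (-((v - u) / v)) := by
      have h2 := Real.add_one_le_exp (-((v - u) / v))
      have h3 : u / v = -((v - u) / v) + 1 := by field_simp; ring
      linarith
    have hun : (u / v) ^ n ≤ Real.exp (-((v - u) / v * n)) := by
      calc (u / v) ^ n ≤ (Real.exp (-((v - u) / v))) ^ n :=
            pow_le_pow_left₀ (by positivity) h1 n
        _ = Real.exp (-((v - u) / v * n)) := by
            rw [← Real.exp_nat_mul]; congr 1; ring
    have hkey : Real.exp (-u) * (u / v) ^ n ≤ Real.exp (-v) := by
      calc Real.exp (-u) * (u / v) ^ n ≤ Real.exp (-u) * Real.exp (-((v - u) / v * n)) :=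
            mul_le_mul_of_nonneg_left hun (Real.exp_nonneg _)
        _ = Real.exp (-u + -((v - u) / v * n)) := (Real.exp_add _ _).symm
        _ ≤ Real.exp (-v) := by
            apply Real.exp_le_exp.2
            have hge : 1 ≤ (n : ℝ) / v := (one_le_div hv0).2 hv
            have h5 : v - u ≤ (v - u) * ((n : ℝ) / v) :=
              le_mul_of_one_le_right (by linarith) hge
            have h6 : (v - u) * ((n : ℝ) / v) = (v - u) / v * n := by ring
            linarith [h6 ▸ h5]
    calc Real.exp (-u) * u ^ n = Real.exp (-u) * (u / v) ^ n * v ^ n := by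
          rw [div_pow, mul_assoc, div_mul_cancel₀]
          positivity
      _ ≤ Real.exp (-v) * v ^ n := mul_le_mul_of_nonneg_right hkey (by positivity)

lemma aux_integrable (n : ℕ) (hn : 1 ≤ n) :
    IntegrableOn (fun u : ℝ => Real.exp (-u) * u ^ (n - 1)) (Set.Ioi 0) := by
  have h := Real.GammaIntegral_convergent (s := (n : ℝ)) (by exact_mod_cast hn.trans_lt' zero_lt_one)
  refine h.congr_fun ?_ measurableSet_Ioi
  intro xx hx
  simp only
  rw [← Real.rpow_natCast xx (n - 1)]
  congr 1
  push_cast [Nat.cast_sub hn]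
  ring

lemma aux_total (n : ℕ) (hn : 1 ≤ n) :
    ∫ u in Set.Ioi (0:ℝ), Real.exp (-u) * u ^ (n - 1) = (Nat.factorial (n - 1) : ℝ) := by
  have h1 : ∫ u in Set.Ioi (0:ℝ), Real.exp (-u) * u ^ (n - 1)
      = ∫ u in Set.Ioi (0:ℝ), Real.exp (-u) * u ^ ((n : ℝ) - 1) := by
    refine setIntegral_congr_fun measurableSet_Ioi ?_
    intro xx hx
    simp only
    rw [← Real.rpow_natCast xx (n - 1)]
    congr 1
    push_cast [Nat.cast_sub hn]
    ring
  rw [h1, ← Real.Gamma_eq_integral (by exact_mod_cast hn.trans_lt' zero_lt_one)]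
  have h2 : (n : ℝ) = ((n - 1 : ℕ) : ℝ) + 1 := by
    push_cast [Nat.cast_sub hn]; ring
  rw [h2, Real.Gamma_nat_eq_factorial]

lemma iGamma_split (n : ℕ) (hn : 1 ≤ n) {a : ℝ} (ha : 0 ≤ a) :
    iGamma n a = (Nat.factorial (n - 1) : ℝ)
      - ∫ u in Set.Ioc 0 a, Real.exp (-u) * u ^ (n - 1) := by
  have hint := aux_integrable n hn
  have hsplit : ∫ u in Set.Ioi (0:ℝ), Real.exp (-u) * u ^ (n - 1)
      = (∫ u in Set.Ioc 0 a, Real.exp (-u) * u ^ (n - 1))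
        + ∫ u in Set.Ioi a, Real.exp (-u) * u ^ (n - 1) := by
    rw [← Set.Ioc_union_Ioi_eq_Ioi ha]
    exact setIntegral_union Set.Ioc_disjoint_Ioi_same measurableSet_Ioi
      (hint.mono_set Set.Ioc_subset_Ioi_self)
      (hint.mono_set (Set.Ioi_subset_Ioi ha))
  rw [iGamma, eq_sub_iff_add_eq, add_comm, ← hsplit, aux_total n hn]

lemma lower_div_tendsto {c : ℝ} (hc0 : 0 < c) (hc1 : c < 1) (b : ℕ → ℝ)
    (hb : ∀ᶠ n in atTop, 0 ≤ b n ∧ b n ≤ c * n) :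
    Tendsto (fun n : ℕ => (∫ u in Set.Ioc 0 (b n), Real.exp (-u) * u ^ (n - 1))
      / (Nat.factorial (n - 1) : ℝ)) atTop (nhds 0) := by
  set q : ℝ := c * Real.exp (1 - c) with hq
  have hq1 : q < 1 := by
    have hlog := Real.log_lt_sub_one_of_pos hc0 (ne_of_lt hc1)
    calc q = Real.exp (Real.log c + (1 - c)) := by
          rw [Real.exp_add, Real.exp_log hc0]
      _ < Real.exp 0 := Real.exp_lt_exp.2 (by linarith)
      _ = 1 := Real.exp_zero
  have hq0 : 0 < q := by positivity
  have hupper : Tendsto (fun n : ℕ => (n : ℝ) * q ^ n) atTop (nhds 0) := by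
    have h := tendsto_pow_const_div_const_pow_of_one_lt 1 (one_lt_inv₀ hq0 |>.2 hq1)
    refine h.congr fun n => ?_
    simp [pow_one, div_eq_mul_inv, inv_pow]
  -- eventual hypotheses
  have h1c : Tendsto (fun n : ℕ => (1 - c) * (n : ℝ)) atTop atTop :=
    Tendsto.const_mul_atTop (by linarith) tendsto_natCast_atTop_atTop
  have hev : ∀ᶠ n : ℕ in atTop, 1 ≤ (1 - c) * (n : ℝ) := h1c.eventually_ge_atTop 1
  refine tendsto_of_tendsto_of_tendsto_of_le_of_le' tendsto_const_nhds hupper ?_ ?_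
  · filter_upwards with n
    apply div_nonneg _ (by positivity)
    exact setIntegral_nonneg measurableSet_Ioc fun u hu =>
      mul_nonneg (Real.exp_nonneg _) (pow_nonneg hu.1.le _)
  · filter_upwards [hb, hev, eventually_ge_atTop 2] with n hbn h1n hn2
    obtain ⟨hb0, hbc⟩ := hbn
    have hn1 : 1 ≤ n := by omega
    have hcast : ((n - 1 : ℕ) : ℝ) = (n : ℝ) - 1 := by
      push_cast [Nat.cast_sub hn1]; ring
    have hcn : c * n ≤ (n : ℝ) - 1 := by nlinarith
    have hb1 : b n ≤ ((n - 1 : ℕ) : ℝ) := by rw [hcast]; linarith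
    -- step 1: bound integral by constant
    have hstep1 : (∫ u in Set.Ioc 0 (b n), Real.exp (-u) * u ^ (n - 1))
        ≤ Real.exp (-(b n)) * (b n) ^ n := by
      have hmono : (∫ u in Set.Ioc 0 (b n), Real.exp (-u) * u ^ (n - 1))
          ≤ ∫ _u in Set.Ioc 0 (b n), Real.exp (-(b n)) * (b n) ^ (n - 1) := by
        refine setIntegral_mono_on
          ((aux_integrable n hn1).mono_set Set.Ioc_subset_Ioi_self)
          (integrableOn_const measure_Ioc_lt_top.ne) measurableSet_Ioc ?_
        intro u hu
        exact aux_mono (n - 1) hu.1.le hu.2 hb1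
      have hconst : (∫ _u in Set.Ioc 0 (b n), Real.exp (-(b n)) * (b n) ^ (n - 1))
          = b n * (Real.exp (-(b n)) * (b n) ^ (n - 1)) := by
        rw [setIntegral_const, Measure.real, Real.volume_Ioc, smul_eq_mul]
        rw [ENNReal.toReal_ofReal (by linarith)]
        ring_nf
      have hpow : b n * (Real.exp (-(b n)) * (b n) ^ (n - 1))
          = Real.exp (-(b n)) * (b n) ^ n := by
        have : (b n) ^ n = (b n) ^ (n - 1) * b n := by
          rw [← pow_succ]; congr 1; omega
        rw [this]; ring
      linarith [hmono, hconst.le, hconst.ge]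
    -- step 2
    have hstep2 : Real.exp (-(b n)) * (b n) ^ n ≤ Real.exp (-(c * n)) * (c * n) ^ n :=
      aux_mono n hb0 hbc (by
        have hn1' : (1 : ℝ) ≤ (n : ℝ) := by exact_mod_cast hn1
        nlinarith)
    -- step 3 : (c n)^n e^{-cn} ≤ n q^n (n-1)!
    have hfact : (n : ℝ) ^ n ≤ Real.exp n * (Nat.factorial n : ℝ) := by
      have hsum := Real.sum_le_exp_of_nonneg (x := (n : ℝ)) (by positivity) (n + 1)
      have hterm : (n : ℝ) ^ n / (Nat.factorial n : ℝ)
          ≤ ∑ i ∈ Finset.range (n + 1), (n : ℝ) ^ i / (Nat.factorial i : ℝ) :=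
        Finset.single_le_sum (f := fun i => (n : ℝ) ^ i / (Nat.factorial i : ℝ))
          (fun i _ => by positivity) (Finset.self_mem_range_succ n)
      have hfp : (0 : ℝ) < (Nat.factorial n : ℝ) := by exact_mod_cast Nat.factorial_pos n
      rw [div_le_iff₀ hfp] at hterm
      calc (n : ℝ) ^ n ≤ (∑ i ∈ Finset.range (n + 1), (n : ℝ) ^ i / (Nat.factorial i : ℝ))
            * (Nat.factorial n : ℝ) := hterm
        _ ≤ Real.exp n * (Nat.factorial n : ℝ) :=
            mul_le_mul_of_nonneg_right hsum hfp.le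
    have hnfact : (Nat.factorial n : ℝ) = (n : ℝ) * (Nat.factorial (n - 1) : ℝ) := by
      have : n = (n - 1) + 1 := by omega
      rw [this, Nat.factorial_succ]
      push_cast
      ring
    have hqn : q ^ n = c ^ n * Real.exp ((1 - c) * n) := by
      rw [hq, mul_pow, ← Real.exp_nat_mul]
      congr 2
      ring
    have hstep3 : Real.exp (-(c * n)) * (c * n) ^ n
        ≤ (n : ℝ) * q ^ n * (Nat.factorial (n - 1) : ℝ) := by
      have he : Real.exp (-(c * n)) * (c * n) ^ n
          = c ^ n * Real.exp (-(c * n)) * (n : ℝ) ^ n := by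
        rw [mul_pow]; ring
      have h2 : c ^ n * Real.exp (-(c * n)) * (n : ℝ) ^ n
          ≤ c ^ n * Real.exp (-(c * n)) * (Real.exp n * (Nat.factorial n : ℝ)) :=
        mul_le_mul_of_nonneg_left hfact (by positivity)
      have h3 : c ^ n * Real.exp (-(c * n)) * (Real.exp n * (Nat.factorial n : ℝ))
          = (n : ℝ) * q ^ n * (Nat.factorial (n - 1) : ℝ) := by
        rw [hqn, hnfact,
          show Real.exp ((1 - c) * (n : ℝ)) = Real.exp (-(c * (n : ℝ))) * Real.exp (n : ℝ) by
            rw [← Real.exp_add]; congr 1; ring]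
        ring
      calc Real.exp (-(c * n)) * (c * n) ^ n
          = c ^ n * Real.exp (-(c * n)) * (n : ℝ) ^ n := he
        _ ≤ c ^ n * Real.exp (-(c * n)) * (Real.exp n * (Nat.factorial n : ℝ)) := h2
        _ = (n : ℝ) * q ^ n * (Nat.factorial (n - 1) : ℝ) := h3
    -- combine
    have hfp1 : (0 : ℝ) < (Nat.factorial (n - 1) : ℝ) := by
      exact_mod_cast Nat.factorial_pos (n - 1)
    rw [div_le_iff₀ hfp1]
    calc (∫ u in Set.Ioc 0 (b n), Real.exp (-u) * u ^ (n - 1))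
        ≤ Real.exp (-(b n)) * (b n) ^ n := hstep1
      _ ≤ Real.exp (-(c * n)) * (c * n) ^ n := hstep2
      _ ≤ (n : ℝ) * q ^ n * (Nat.factorial (n - 1) : ℝ) := hstep3

lemma iGamma_div_tendsto {c : ℝ} (hc0 : 0 < c) (hc1 : c < 1) (b : ℕ → ℝ)
    (hb : ∀ᶠ n in atTop, 0 ≤ b n ∧ b n ≤ c * n) :
    Tendsto (fun n : ℕ => iGamma n (b n) / (Nat.factorial (n - 1) : ℝ)) atTop (nhds 1) := by
  have h0 := lower_div_tendsto hc0 hc1 b hb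
  have h1 : Tendsto (fun n : ℕ => 1 - (∫ u in Set.Ioc 0 (b n), Real.exp (-u) * u ^ (n - 1))
      / (Nat.factorial (n - 1) : ℝ)) atTop (nhds 1) := by
    simpa using tendsto_const_nhds.sub h0
  refine h1.congr' ?_
  filter_upwards [hb, eventually_ge_atTop 1] with n hbn hn1
  have hfp : ((Nat.factorial (n - 1) : ℝ)) ≠ 0 := by
    exact_mod_cast (Nat.factorial_pos (n - 1)).ne'
  rw [iGamma_split n hn1 hbn.1]
  field_simp

noncomputable def Pr (N : ℕ) (t l : ℝ) : ℝ :=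
  (1 / (2 * Real.sqrt (2 * π))) * Real.exp (l ^ 2 / (2 * (1 + t))) *
    (1 / (t * (1 + t))) * (t / (1 + t)) ^ (((N : ℝ) - 1) / 2) *
    (1 / Nat.factorial (N - 2)) *
    (iGamma N (l ^ 2) - l ^ 2 * (t / (1 + t)) * iGamma (N - 1) (l ^ 2))

theorem stmt7 (x s : ℝ) (hx : |x| < 1) (hs : 0 < s) :
    Tendsto (fun N : ℕ => (N : ℝ) * Pr N ((N : ℝ) * s) (Real.sqrt N * x)) atTop
      (nhds ((1 / (2 * Real.sqrt (2 * π))) * Real.exp (-(1 - x ^ 2) / (2 * s)) *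
        (1 - x ^ 2) / s ^ 2)) := by
  have hx2 : x ^ 2 < 1 := by
    obtain ⟨h1, h2⟩ := abs_lt.1 hx
    nlinarith
  set c : ℝ := (1 + x ^ 2) / 2 with hc
  have hc0 : 0 < c := by positivity
  have hc1 : c < 1 := by rw [hc]; linarith
  have hdiv : ∀ a : ℝ, Tendsto (fun N : ℕ => a / (N : ℝ)) atTop (nhds 0) := fun a =>
    tendsto_const_nhds.div_atTop tendsto_natCast_atTop_atTop
  -- g limit
  have hg : Tendsto (fun n : ℕ => iGamma n ((n : ℝ) * x ^ 2) / (Nat.factorial (n - 1) : ℝ))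
      atTop (nhds 1) := by
    apply iGamma_div_tendsto hc0 hc1
    filter_upwards with n
    refine ⟨by positivity, ?_⟩
    have hxc : x ^ 2 ≤ c := by rw [hc]; linarith
    have hn0 : (0 : ℝ) ≤ (n : ℝ) := Nat.cast_nonneg n
    nlinarith
  -- shifted limit
  have hF : Tendsto (fun m : ℕ => iGamma m (((m : ℝ) + 1) * x ^ 2) / (Nat.factorial (m - 1) : ℝ))
      atTop (nhds 1) := by
    apply iGamma_div_tendsto hc0 hc1
    have hcx : (0 : ℝ) < c - x ^ 2 := by rw [hc]; linarith
    have htend : Tendsto (fun m : ℕ => (c - x ^ 2) * (m : ℝ)) atTop atTop :=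
      Tendsto.const_mul_atTop hcx tendsto_natCast_atTop_atTop
    filter_upwards [htend.eventually_ge_atTop (x ^ 2)] with m hm
    refine ⟨by positivity, by nlinarith⟩
  have hh : Tendsto (fun N : ℕ => iGamma (N - 1) ((N : ℝ) * x ^ 2) / (Nat.factorial (N - 2) : ℝ))
      atTop (nhds 1) := by
    have h := hF.comp (tendsto_sub_atTop_nat 1)
    refine h.congr' ?_
    filter_upwards [eventually_ge_atTop 1] with N hN
    have h1 : ((N - 1 : ℕ) : ℝ) + 1 = (N : ℝ) := by push_cast [Nat.cast_sub hN]; ring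
    simp only [Function.comp_apply]
    rw [h1]
    norm_num [Nat.sub_sub]
  -- ratio r limit
  have hbase : Tendsto (fun N : ℕ => 1 + (1 / s) / (N : ℝ)) atTop (nhds 1) := by
    simpa using (hdiv (1 / s)).const_add 1
  have hr : Tendsto (fun N : ℕ => ((N : ℝ) * s) / (1 + (N : ℝ) * s)) atTop (nhds 1) := by
    have h := (tendsto_const_nhds (x := (1 : ℝ))).div hbase one_ne_zero
    have h' : Tendsto (fun N : ℕ => 1 / (1 + (1 / s) / (N : ℝ))) atTop (nhds 1) := by
      have h1 : (1 : ℝ) / 1 = 1 := by norm_num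
      rw [h1] at h
      exact h.congr fun N => by simp [Pi.div_apply]
    refine h'.congr' ?_
    filter_upwards [eventually_ge_atTop 1] with N hN
    have hN0 : (0 : ℝ) < N := by exact_mod_cast hN
    have ht1 : (0 : ℝ) < 1 + (N : ℝ) * s := by positivity
    field_simp
    ring
  -- E2
  have hE2 : Tendsto (fun N : ℕ => Real.exp ((N : ℝ) * x ^ 2 / (2 * (1 + (N : ℝ) * s)))) atTop
      (nhds (Real.exp (x ^ 2 / (2 * s)))) := by
    have hden : Tendsto (fun N : ℕ => 2 / (N : ℝ) + 2 * s) atTop (nhds (2 * s)) := by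
      simpa using (hdiv 2).add_const (2 * s)
    have harg : Tendsto (fun N : ℕ => (N : ℝ) * x ^ 2 / (2 * (1 + (N : ℝ) * s))) atTop
        (nhds (x ^ 2 / (2 * s))) := by
      have h := (tendsto_const_nhds (x := x ^ 2)).div hden (by positivity)
      refine h.congr' ?_
      filter_upwards [eventually_ge_atTop 1] with N hN
      have hN0 : (0 : ℝ) < N := by exact_mod_cast hN
      have ht1 : (0 : ℝ) < 1 + (N : ℝ) * s := by positivity
      rw [Pi.div_apply]
      field_simp
    exact (Real.continuous_exp.tendsto _).comp harg
  -- E3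
  have hlog0 : Tendsto (fun N : ℕ => Real.log (1 + (1 / s) / (N : ℝ))) atTop (nhds 0) := by
    have hcont := (Real.continuousAt_log (by norm_num : (1 : ℝ) ≠ 0)).tendsto
    simpa [Function.comp_def] using hcont.comp hbase
  have hNlog : Tendsto (fun N : ℕ => (N : ℝ) * Real.log (1 + (1 / s) / (N : ℝ))) atTop
      (nhds (1 / s)) :=
    (Real.tendsto_mul_log_one_add_div_atTop (1 / s)).comp tendsto_natCast_atTop_atTop
  have hexparg : Tendsto (fun N : ℕ => -(Real.log (1 + (1 / s) / (N : ℝ))) * (((N : ℝ) - 1) / 2))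
      atTop (nhds (-(1 / (2 * s)))) := by
    have h := (hNlog.const_mul (-(1 / 2) : ℝ)).add (hlog0.const_mul (1 / 2))
    have h2 : (-(1 / 2) : ℝ) * (1 / s) + 1 / 2 * 0 = -(1 / (2 * s)) := by ring
    rw [h2] at h
    exact h.congr fun N => by ring
  have hE3 : Tendsto (fun N : ℕ => (((N : ℝ) * s) / (1 + (N : ℝ) * s)) ^ (((N : ℝ) - 1) / 2))
      atTop (nhds (Real.exp (-(1 / (2 * s))))) := by
    have h := (Real.continuous_exp.tendsto _).comp hexparg
    refine h.congr' ?_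
    filter_upwards [eventually_ge_atTop 1] with N hN
    have hN0 : (0 : ℝ) < N := by exact_mod_cast hN
    have ht0 : (0 : ℝ) < (N : ℝ) * s := by positivity
    have ht1 : (0 : ℝ) < 1 + (N : ℝ) * s := by positivity
    have hrpos : (0 : ℝ) < ((N : ℝ) * s) / (1 + (N : ℝ) * s) := by positivity
    simp only [Function.comp_apply]
    rw [Real.rpow_def_of_pos hrpos]
    congr 1
    have hlogr : Real.log (((N : ℝ) * s) / (1 + (N : ℝ) * s))
        = -Real.log (1 + (1 / s) / (N : ℝ)) := by
      rw [show (1 : ℝ) + (1 / s) / (N : ℝ) = (((N : ℝ) * s) / (1 + (N : ℝ) * s))⁻¹ by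
        rw [inv_div]
        field_simp
        ring, Real.log_inv, neg_neg]
    rw [hlogr]
  -- E4
  have hE4 : Tendsto (fun N : ℕ => (N : ℝ) ^ 2 / (((N : ℝ) * s) * (1 + (N : ℝ) * s))) atTop
      (nhds (1 / s ^ 2)) := by
    have hden : Tendsto (fun N : ℕ => s / (N : ℝ) + s ^ 2) atTop (nhds (s ^ 2)) := by
      simpa using (hdiv s).add_const (s ^ 2)
    have h := (tendsto_const_nhds (x := (1 : ℝ))).div hden (by positivity)
    refine h.congr' ?_
    filter_upwards [eventually_ge_atTop 1] with N hN
    have hN0 : (0 : ℝ) < N := by exact_mod_cast hN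
    have ht1 : (0 : ℝ) < 1 + (N : ℝ) * s := by positivity
    rw [Pi.div_apply]
    field_simp
  -- E5
  have hE5 : Tendsto (fun N : ℕ => (1 / (N : ℝ)) * (1 / (Nat.factorial (N - 2) : ℝ)) *
      (iGamma N ((N : ℝ) * x ^ 2) - (N : ℝ) * x ^ 2 * (((N : ℝ) * s) / (1 + (N : ℝ) * s)) *
        iGamma (N - 1) ((N : ℝ) * x ^ 2))) atTop (nhds (1 - x ^ 2)) := by
    have hfrac : Tendsto (fun N : ℕ => ((N : ℝ) - 1) / (N : ℝ)) atTop (nhds 1) := by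
      have h := tendsto_const_nhds (x := (1 : ℝ)) |>.sub (hdiv 1)
      have h' : Tendsto (fun N : ℕ => 1 - 1 / (N : ℝ)) atTop (nhds 1) := by simpa using h
      refine h'.congr' ?_
      filter_upwards [eventually_ge_atTop 1] with N hN
      have hN0 : (0 : ℝ) < N := by exact_mod_cast hN
      field_simp
    have hq1 : Tendsto (fun N : ℕ => (((N : ℝ) - 1) / (N : ℝ)) *
        (iGamma N ((N : ℝ) * x ^ 2) / (Nat.factorial (N - 1) : ℝ))) atTop (nhds 1) := by
      simpa using hfrac.mul hg
    have hq2 : Tendsto (fun N : ℕ => x ^ 2 * (((N : ℝ) * s) / (1 + (N : ℝ) * s)) *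
        (iGamma (N - 1) ((N : ℝ) * x ^ 2) / (Nat.factorial (N - 2) : ℝ))) atTop
        (nhds (x ^ 2)) := by
      simpa using ((tendsto_const_nhds (x := x ^ 2)).mul hr).mul hh
    have h := hq1.sub hq2
    refine h.congr' ?_
    filter_upwards [eventually_ge_atTop 2] with N hN
    have hN0 : (0 : ℝ) < N := by
      have h1 : (1 : ℕ) ≤ N := by omega
      exact_mod_cast Nat.lt_of_lt_of_le Nat.zero_lt_one h1
    have hN2 : (2 : ℝ) ≤ (N : ℝ) := by exact_mod_cast hN
    have ht1 : (0 : ℝ) < 1 + (N : ℝ) * s := by positivity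
    have hfacteq : (Nat.factorial (N - 1) : ℝ) = ((N : ℝ) - 1) * (Nat.factorial (N - 2) : ℝ) := by
      have h1 : N - 1 = (N - 2) + 1 := by omega
      rw [h1, Nat.factorial_succ]
      push_cast
      have h2 : ((N - 2 : ℕ) : ℝ) = (N : ℝ) - 2 := by
        push_cast [Nat.cast_sub (by omega : 2 ≤ N)]; ring
      rw [h2]; ring
    have hN1 : ((N : ℝ) - 1) ≠ 0 := ne_of_gt (by linarith)
    have hf2 : (Nat.factorial (N - 2) : ℝ) ≠ 0 := by
      exact_mod_cast (Nat.factorial_pos (N - 2)).ne'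
    rw [hfacteq]
    field_simp
  -- final assembly
  have hC : Tendsto (fun _ : ℕ => (1 / (2 * Real.sqrt (2 * π)) : ℝ)) atTop
      (nhds (1 / (2 * Real.sqrt (2 * π)))) := tendsto_const_nhds
  have hall := (((hC.mul hE2).mul hE3).mul hE4).mul hE5
  have hgoal : (1 / (2 * Real.sqrt (2 * π))) * Real.exp (-(1 - x ^ 2) / (2 * s)) *
        (1 - x ^ 2) / s ^ 2
      = 1 / (2 * Real.sqrt (2 * π)) * Real.exp (x ^ 2 / (2 * s)) * Real.exp (-(1 / (2 * s))) *
        (1 / s ^ 2) * (1 - x ^ 2) := by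
    have he : Real.exp (x ^ 2 / (2 * s)) * Real.exp (-(1 / (2 * s)))
        = Real.exp (-(1 - x ^ 2) / (2 * s)) := by
      rw [← Real.exp_add]
      congr 1
      field_simp
      ring
    rw [← he]
    ring
  rw [hgoal]
  refine hall.congr' ?_
  filter_upwards [eventually_ge_atTop 2] with N hN
  have hN0 : (0 : ℝ) < N := by
    have h1 : (0 : ℕ) < N := by omega
    exact_mod_cast h1
  have ht0 : (0 : ℝ) < (N : ℝ) * s := by positivity
  have ht1 : (0 : ℝ) < 1 + (N : ℝ) * s := by positivity
  have hf2 : (Nat.factorial (N - 2) : ℝ) ≠ 0 := by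
    exact_mod_cast (Nat.factorial_pos (N - 2)).ne'
  have hsq : (Real.sqrt N * x) ^ 2 = (N : ℝ) * x ^ 2 := by
    rw [mul_pow, Real.sq_sqrt (Nat.cast_nonneg N)]
  rw [Pr, hsq]
  field_simp
end
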